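/- Let (X, 𝒯) be an α-subparacompact space and let A ⊆ X be F_σ-gα-closed (i.e. a countable union of gα-closed sets). Then the subspace (A, 𝒯|A) is α-subparacompact. -/

import Mathlib

open Set TopologicalSpace

universe u v

variable {X : Type u} {Y : Type v}

/-- A set is an α-set (α-open) w.r.t. the topology `T` if `A ⊆ Int (Cl (Int A))`. -/
def AlphaOpen (T : TopologicalSpace X) (A : Set X) : Prop :=
  letI := T
  A ⊆ interior (closure (interior A))

/-- The α-topology `𝒯^α`, whose open sets are exactly the α-sets of `T`. -/
def alphaTop (T : TopologicalSpace X) : TopologicalSpace X :=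
  letI := T
  { IsOpen := fun A => A ⊆ interior (closure (interior A))
    isOpen_univ := by simp
    isOpen_inter := by
      intro A B hA hB
      have hsub : interior (closure (interior A)) ∩ interior (closure (interior B)) ⊆
          closure (interior (A ∩ B)) := by
        intro x hx
        have h1 : interior (closure (interior B)) ∩ closure (interior A) ⊆
            closure (interior (closure (interior B)) ∩ interior A) :=
          isOpen_interior.inter_closure
        have h2 : interior (closure (interior B)) ∩ interior A ⊆
            closure (interior A ∩ interior B) := by
          intro y hy
          have h : interior A ∩ closure (interior B) ⊆ closure (interior A ∩ interior B) :=
            isOpen_interior.inter_closure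
          exact h ⟨hy.2, interior_subset hy.1⟩
        have h3 : closure (interior (closure (interior B)) ∩ interior A) ⊆
            closure (interior A ∩ interior B) := by
          calc closure (interior (closure (interior B)) ∩ interior A)
              ⊆ closure (closure (interior A ∩ interior B)) := closure_mono h2
            _ = closure (interior A ∩ interior B) := closure_closure
        have hx' : x ∈ closure (interior A ∩ interior B) :=
          h3 (h1 ⟨hx.2, interior_subset hx.1⟩)
        rwa [← interior_inter] at hx'
      intro x hx
      exact interior_maximal hsub (isOpen_interior.inter isOpen_interior) ⟨hA hx.1, hB hx.2⟩
    isOpen_sUnion := by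
      intro S hS x hx
      obtain ⟨t, htS, hxt⟩ := hx
      have h : interior (closure (interior t)) ⊆ interior (closure (interior (⋃₀ S))) :=
        interior_mono (closure_mono (interior_mono (subset_sUnion_of_mem htS)))
      exact h (hS t htS hxt) }

/-- `A` is semi-open w.r.t. `T` if `A ⊆ Cl (Int A)`. -/
def SemiOpen (T : TopologicalSpace X) (A : Set X) : Prop :=
  letI := T
  A ⊆ closure (interior A)

/-- `A` is semi-closed if its complement is semi-open. -/
def SemiClosed (T : TopologicalSpace X) (A : Set X) : Prop :=
  SemiOpen T Aᶜ

/-- The semi-closure of `A`: the intersection of all semi-closed sets containing `A`. -/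
def sCl (T : TopologicalSpace X) (A : Set X) : Set X :=
  ⋂₀ {C | SemiClosed T C ∧ A ⊆ C}

/-- `A` is sg-closed if `sCl A ⊆ U` whenever `A ⊆ U` with `U` semi-open. -/
def SgClosed (T : TopologicalSpace X) (A : Set X) : Prop :=
  ∀ U : Set X, SemiOpen T U → A ⊆ U → sCl T A ⊆ U

/-- `A` is sg-open if its complement is sg-closed. -/
def SgOpen (T : TopologicalSpace X) (A : Set X) : Prop :=
  SgClosed T Aᶜ

/-- `A` is regular closed w.r.t. `T` if `A = Cl (Int A)`. -/
def RegClosed (T : TopologicalSpace X) (A : Set X) : Prop :=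
  letI := T
  A = closure (interior A)

/-- A family `𝒱` refines a family `𝒰` if every member of `𝒱` is contained in a member of `𝒰`. -/
def Refines (𝒱 𝒰 : Set (Set X)) : Prop :=
  ∀ V ∈ 𝒱, ∃ U ∈ 𝒰, V ⊆ U

/-- A family of sets is locally finite if every point has a neighbourhood
meeting only finitely many members. -/
def LocFinite (T : TopologicalSpace X) (𝒱 : Set (Set X)) : Prop :=
  ∀ x : X, ∃ N ∈ @nhds X T x, {V ∈ 𝒱 | (V ∩ N).Nonempty}.Finite

/-- A family of sets is locally countable if every point has a neighbourhood
meeting only countably many members. -/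
def LocCountable (T : TopologicalSpace X) (𝒱 : Set (Set X)) : Prop :=
  ∀ x : X, ∃ N ∈ @nhds X T x, {V ∈ 𝒱 | (V ∩ N).Nonempty}.Countable

/-- A family of sets is discrete if every point has a neighbourhood
meeting at most one member. -/
def DiscreteFam (T : TopologicalSpace X) (𝒱 : Set (Set X)) : Prop :=
  ∀ x : X, ∃ N ∈ @nhds X T x, {V ∈ 𝒱 | (V ∩ N).Nonempty}.Subsingleton

/-- A family is σ-discrete if it is a countable union of discrete families. -/
def SigmaDiscrete (T : TopologicalSpace X) (𝒱 : Set (Set X)) : Prop :=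
  ∃ 𝒲 : ℕ → Set (Set X), 𝒱 = ⋃ n, 𝒲 n ∧ ∀ n, DiscreteFam T (𝒲 n)

/-- A family is closure-preserving if for every subfamily the closure of the
union is the union of the closures. -/
def ClosurePreserving (T : TopologicalSpace X) (𝒲 : Set (Set X)) : Prop :=
  letI := T
  ∀ 𝒲' ⊆ 𝒲, closure (⋃₀ 𝒲') = ⋃ W ∈ 𝒲', closure W

/-- A family is σ-closure-preserving if it is a countable union of
closure-preserving families. -/
def SigmaClosurePreserving (T : TopologicalSpace X) (𝒱 : Set (Set X)) : Prop :=
  ∃ 𝒲 : ℕ → Set (Set X), 𝒱 = ⋃ n, 𝒲 n ∧ ∀ n, ClosurePreserving T (𝒲 n)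

/-- Semi-compact: every semi-open cover has a finite subcover. -/
def SemiCompact (T : TopologicalSpace X) : Prop :=
  ∀ 𝒰 : Set (Set X), (∀ U ∈ 𝒰, SemiOpen T U) → ⋃₀ 𝒰 = univ →
    ∃ 𝒱 ⊆ 𝒰, 𝒱.Finite ∧ ⋃₀ 𝒱 = univ

/-- S-closed: for every semi-open cover there is a finite subfamily
whose closures cover. -/
def SClosed (T : TopologicalSpace X) : Prop :=
  letI := T
  ∀ 𝒰 : Set (Set X), (∀ U ∈ 𝒰, SemiOpen T U) → ⋃₀ 𝒰 = univ →
    ∃ 𝒱 ⊆ 𝒰, 𝒱.Finite ∧ (⋃ V ∈ 𝒱, closure V) = univ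

/-- s-closed: for every semi-open cover there is a finite subfamily
whose semi-closures cover. -/
def SmallSClosed (T : TopologicalSpace X) : Prop :=
  ∀ 𝒰 : Set (Set X), (∀ U ∈ 𝒰, SemiOpen T U) → ⋃₀ 𝒰 = univ →
    ∃ 𝒱 ⊆ 𝒰, 𝒱.Finite ∧ (⋃ V ∈ 𝒱, sCl T V) = univ

/-- rc-Lindelöf: every regular closed cover has a countable subcover. -/
def RcLindelof (T : TopologicalSpace X) : Prop :=
  ∀ 𝒰 : Set (Set X), (∀ U ∈ 𝒰, RegClosed T U) → ⋃₀ 𝒰 = univ →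
    ∃ 𝒱 ⊆ 𝒰, 𝒱.Countable ∧ ⋃₀ 𝒱 = univ

/-- sg-compact: every sg-open cover has a finite subcover. -/
def SgCompact (T : TopologicalSpace X) : Prop :=
  ∀ 𝒰 : Set (Set X), (∀ U ∈ 𝒰, SgOpen T U) → ⋃₀ 𝒰 = univ →
    ∃ 𝒱 ⊆ 𝒰, 𝒱.Finite ∧ ⋃₀ 𝒱 = univ

/-- `A` is S-closed relative to `X`: every cover of `A` by semi-open sets of `X`
has a finite subfamily whose closures cover `A`. -/
def SClosedRel (T : TopologicalSpace X) (A : Set X) : Prop :=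
  letI := T
  ∀ 𝒰 : Set (Set X), (∀ U ∈ 𝒰, SemiOpen T U) → A ⊆ ⋃₀ 𝒰 →
    ∃ 𝒱 ⊆ 𝒰, 𝒱.Finite ∧ A ⊆ ⋃ V ∈ 𝒱, closure V

/-- `A` is s-closed relative to `X`: every cover of `A` by semi-open sets of `X`
has a finite subfamily whose semi-closures cover `A`. -/
def SmallSClosedRel (T : TopologicalSpace X) (A : Set X) : Prop :=
  ∀ 𝒰 : Set (Set X), (∀ U ∈ 𝒰, SemiOpen T U) → A ⊆ ⋃₀ 𝒰 →
    ∃ 𝒱 ⊆ 𝒰, 𝒱.Finite ∧ A ⊆ ⋃ V ∈ 𝒱, sCl T V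

/-- Locally S-closed: every point has a neighbourhood which is S-closed relative to `X`. -/
def LocallySClosed (T : TopologicalSpace X) : Prop :=
  ∀ x : X, ∃ N ∈ @nhds X T x, SClosedRel T N

/-- Locally s-closed: every point has a neighbourhood which is s-closed relative to `X`. -/
def LocallySmallSClosed (T : TopologicalSpace X) : Prop :=
  ∀ x : X, ∃ N ∈ @nhds X T x, SmallSClosedRel T N

/-- para-S-closed: every semi-open cover has a locally finite refinement by
semi-open sets whose union is dense. -/
def ParaSClosed (T : TopologicalSpace X) : Prop :=
  letI := T
  ∀ 𝒰 : Set (Set X), (∀ U ∈ 𝒰, SemiOpen T U) → ⋃₀ 𝒰 = univ →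
    ∃ 𝒱 : Set (Set X), (∀ V ∈ 𝒱, SemiOpen T V) ∧ LocFinite T 𝒱 ∧ Refines 𝒱 𝒰 ∧
      closure (⋃₀ 𝒱) = univ

/-- para-rc-Lindelöf: every regular closed cover has a locally countable
refinement by regular closed sets. -/
def ParaRcLindelof (T : TopologicalSpace X) : Prop :=
  ∀ 𝒰 : Set (Set X), (∀ U ∈ 𝒰, RegClosed T U) → ⋃₀ 𝒰 = univ →
    ∃ 𝒱 : Set (Set X), (∀ V ∈ 𝒱, RegClosed T V) ∧ LocCountable T 𝒱 ∧ Refines 𝒱 𝒰 ∧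
      ⋃₀ 𝒱 = univ

/-- α-subparacompact: every α-open cover has a σ-discrete closed refinement covering `X`. -/
def AlphaSubparacompact (T : TopologicalSpace X) : Prop :=
  ∀ 𝒰 : Set (Set X), (∀ U ∈ 𝒰, AlphaOpen T U) → ⋃₀ 𝒰 = univ →
    ∃ 𝒱 : Set (Set X), (∀ V ∈ 𝒱, @IsClosed X T V) ∧ SigmaDiscrete T 𝒱 ∧ Refines 𝒱 𝒰 ∧
      ⋃₀ 𝒱 = univ

/-- gα-closed: `Cl_α A ⊆ U` whenever `A ⊆ U` with `U` α-open. -/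
def GAlphaClosed (T : TopologicalSpace X) (A : Set X) : Prop :=
  ∀ U : Set X, AlphaOpen T U → A ⊆ U → @closure X (alphaTop T) A ⊆ U

/-- α-paracompact: every α-open cover has a locally finite open refinement. -/
def AlphaParacompact (T : TopologicalSpace X) : Prop :=
  ∀ 𝒰 : Set (Set X), (∀ U ∈ 𝒰, AlphaOpen T U) → ⋃₀ 𝒰 = univ →
    ∃ 𝒱 : Set (Set X), (∀ V ∈ 𝒱, T.IsOpen V) ∧ LocFinite T 𝒱 ∧ Refines 𝒱 𝒰 ∧
      ⋃₀ 𝒱 = univ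

lemma alpha_extension (T : TopologicalSpace X) (A : Set X) (U' : Set A)
    (hU' : AlphaOpen (TopologicalSpace.induced (Subtype.val : A → X) T) U') :
    ∃ V : Set X, AlphaOpen T V ∧ (Subtype.val : A → X) ⁻¹' V = U' := by
  classical
  letI tA : TopologicalSpace A := TopologicalSpace.induced (Subtype.val : A → X) T
  letI : TopologicalSpace X := T
  have hind : Topology.IsInducing (Subtype.val : A → X) := ⟨rfl⟩
  -- W' := relative interior of U'
  set W' : Set A := interior U' with hW'def
  obtain ⟨G, hGopen, hGW⟩ : ∃ G : Set X, IsOpen G ∧ Subtype.val ⁻¹' G = W' :=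
    isOpen_induced_iff.mp isOpen_interior
  set W : Set X := Subtype.val '' W' with hWdef
  have hWG : W ⊆ G := by
    rintro x ⟨x', hx', rfl⟩
    rw [← hGW] at hx'; exact hx'
  have hWU : ∀ x : A, (x : X) ∈ W → x ∈ U' := by
    rintro x hx
    rcases hx with ⟨x', hx', hxx⟩
    have : x' = x := Subtype.val_injective hxx
    exact this ▸ interior_subset hx'
  -- H
  set H : Set X := ⋃₀ {O : Set X | IsOpen O ∧ O ∩ A ⊆ closure W} with hHdef
  have hHopen : IsOpen H := isOpen_sUnion (fun O hO => hO.1)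
  have hGH : G ⊆ H := by
    intro x hx
    refine ⟨G, ⟨hGopen, ?_⟩, hx⟩
    rintro y ⟨hyG, hyA⟩
    have : (⟨y, hyA⟩ : A) ∈ W' := by rw [← hGW]; exact hyG
    exact subset_closure ⟨⟨y, hyA⟩, this, rfl⟩
  have hUH : ∀ x : A, x ∈ U' → (x : X) ∈ H := by
    intro x hx
    have h1 : x ∈ interior (closure W') := hU' hx
    rcases mem_interior.mp h1 with ⟨t', ht'sub, ht'open, hxt'⟩
    rcases isOpen_induced_iff.mp ht'open with ⟨O, hOopen, hOt'⟩
    refine ⟨O, ⟨hOopen, ?_⟩, by rw [← hOt'] at hxt'; exact hxt'⟩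
    rintro y ⟨hyO, hyA⟩
    have hy' : (⟨y, hyA⟩ : A) ∈ closure W' := ht'sub (by rw [← hOt']; exact hyO)
    rw [hind.closure_eq_preimage_closure_image] at hy'
    exact hy'
  have hHsub : H ⊆ closure W ∪ (closure A)ᶜ := by
    intro x hx
    by_cases hxA : x ∈ closure A
    · left
      rcases hx with ⟨O, ⟨hOopen, hOA⟩, hxO⟩
      have : x ∈ closure (O ∩ A) := by
        rw [mem_closure_iff]
        intro N hN hxN
        rcases mem_closure_iff.mp hxA (N ∩ O) (hN.inter hOopen) ⟨hxN, hxO⟩ with ⟨y, ⟨hyN, hyO⟩, hyA⟩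
        exact ⟨y, hyN, hyO, hyA⟩
      have := closure_mono hOA this
      rwa [closure_closure] at this
    · right; exact hxA
  -- define V
  set U : Set X := Subtype.val '' U' with hUdef
  refine ⟨U ∪ (H \ A), ?_, ?_⟩
  · -- AlphaOpen
    set P : Set X := G ∪ (H \ closure A) with hPdef
    have hPopen : IsOpen P := hGopen.union (hHopen.sdiff isClosed_closure)
    have hPV : P ⊆ U ∪ (H \ A) := by
      rintro x (hxG | ⟨hxH, hxA⟩)
      · by_cases hxA : x ∈ A
        · left
          have : (⟨x, hxA⟩ : A) ∈ W' := by rw [← hGW]; exact hxG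
          exact ⟨⟨x, hxA⟩, interior_subset this, rfl⟩
        · right; exact ⟨hGH hxG, hxA⟩
      · exact Or.inr ⟨hxH, fun h => hxA (subset_closure h)⟩
    have hVH : U ∪ (H \ A) ⊆ H := by
      rintro x (⟨x', hx', rfl⟩ | ⟨hxH, _⟩)
      · exact hUH x' hx'
      · exact hxH
    have hHclP : H ⊆ closure P := by
      intro x hx
      rcases hHsub hx with h | h
      · exact closure_mono (hWG.trans (subset_union_left)) h
      · exact subset_closure (Or.inr ⟨hx, h⟩)
    have hHint : H ⊆ interior (closure (interior (U ∪ (H \ A)))) := by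
      have h1 : P ⊆ interior (U ∪ (H \ A)) := interior_maximal hPV hPopen
      have h2 : H ⊆ closure (interior (U ∪ (H \ A))) := hHclP.trans (closure_mono h1)
      exact interior_maximal h2 hHopen
    exact fun x hx => hHint (hVH hx)
  · -- preimage
    ext x
    simp only [mem_preimage, mem_union]
    constructor
    · rintro (h | ⟨_, hna⟩)
      · rcases h with ⟨x', hx', hval⟩
        have hxx : x' = x := Subtype.val_injective hval
        exact hxx ▸ hx'
      · exact absurd x.2 hna
    · intro h
      exact Or.inl ⟨x, h, rfl⟩

/-- an `F_σ`-gα-closed subset of an α-subparacompact space is an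
α-subparacompact subspace. -/
theorem alphaSubparacompact_of_FsigmaGAlphaClosed (T : TopologicalSpace X)
    (hX : AlphaSubparacompact T) (A : Set X)
    (hA : ∃ B : ℕ → Set X, (∀ n, GAlphaClosed T (B n)) ∧ A = ⋃ n, B n) :
    AlphaSubparacompact (TopologicalSpace.induced (Subtype.val : A → X) T) := by
  classical
  letI : TopologicalSpace X := T
  obtain ⟨B, hBg, hAB⟩ := hA
  have hBA : ∀ n, B n ⊆ A := fun n => hAB ▸ subset_iUnion B n
  intro 𝒰 h𝒰 hcov
  have key : ∀ U' : Set A, ∃ V : Set X,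
      U' ∈ 𝒰 → AlphaOpen T V ∧ (Subtype.val : A → X) ⁻¹' V = U' := by
    intro U'
    by_cases h : U' ∈ 𝒰
    · obtain ⟨V, hV⟩ := alpha_extension T A U' (h𝒰 U' h)
      exact ⟨V, fun _ => hV⟩
    · exact ⟨∅, fun h' => absurd h' h⟩
  choose g hg using key
  set 𝒢 : Set (Set X) := g '' 𝒰 with h𝒢
  have h𝒢α : ∀ V ∈ 𝒢, AlphaOpen T V := by
    rintro V ⟨U', hU', rfl⟩; exact (hg U' hU').1
  have hS : AlphaOpen T (⋃₀ 𝒢) :=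
    @isOpen_sUnion X (alphaTop T) 𝒢 h𝒢α
  have hA𝒢 : A ⊆ ⋃₀ 𝒢 := by
    intro a ha
    have hmem : (⟨a, ha⟩ : A) ∈ ⋃₀ 𝒰 := hcov ▸ mem_univ _
    obtain ⟨U', hU', hx⟩ := hmem
    refine ⟨g U', ⟨U', hU', rfl⟩, ?_⟩
    rw [← (hg U' hU').2] at hx
    exact hx
  have hcl : ∀ n, @closure X (alphaTop T) (B n) ⊆ ⋃₀ 𝒢 := fun n =>
    hBg n _ hS ((hBA n).trans hA𝒢)
  have main : ∀ n, ∃ 𝒱 : Set (Set X), (∀ V ∈ 𝒱, @IsClosed X T V) ∧ SigmaDiscrete T 𝒱 ∧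
      Refines 𝒱 (𝒢 ∪ {(@closure X (alphaTop T) (B n))ᶜ}) ∧ ⋃₀ 𝒱 = univ := by
    intro n
    apply hX
    · rintro U (hU | hU)
      · exact h𝒢α U hU
      · rw [mem_singleton_iff] at hU; subst hU
        exact (@isClosed_closure X (alphaTop T) (B n)).isOpen_compl
    · apply eq_univ_of_forall
      intro x
      by_cases hx : x ∈ @closure X (alphaTop T) (B n)
      · obtain ⟨V, hV, hxV⟩ := hcl n hx
        exact ⟨V, Or.inl hV, hxV⟩
      · exact ⟨_, Or.inr rfl, hx⟩
  choose 𝒱 h𝒱c h𝒱sd h𝒱r h𝒱u using main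
  choose 𝒲 h𝒲eq h𝒲d using h𝒱sd
  have h𝒲𝒱 : ∀ n k, 𝒲 n k ⊆ 𝒱 n := by
    intro n k W hW
    rw [h𝒲eq n]
    exact mem_iUnion.mpr ⟨k, hW⟩
  set F : ℕ → ℕ → Set (Set A) := fun n k =>
    {S | ∃ W ∈ 𝒲 n k, (W ∩ B n).Nonempty ∧ S = (Subtype.val : A → X) ⁻¹' W} with hF
  refine ⟨⋃ p : ℕ × ℕ, F p.1 p.2, ?_, ?_, ?_, ?_⟩
  · -- closed
    rintro S hS
    obtain ⟨p, W, hW, -, rfl⟩ := mem_iUnion.mp hS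
    exact isClosed_induced_iff.mpr ⟨W, h𝒱c p.1 W (h𝒲𝒱 p.1 p.2 hW), rfl⟩
  · -- sigma discrete
    refine ⟨fun m => F (Nat.pairEquiv.symm m).1 (Nat.pairEquiv.symm m).2, ?_, ?_⟩
    · ext S
      simp only [mem_iUnion]
      constructor
      · rintro ⟨p, hp⟩
        exact ⟨Nat.pairEquiv p, by rwa [Equiv.symm_apply_apply]⟩
      · rintro ⟨m, hm⟩
        exact ⟨Nat.pairEquiv.symm m, hm⟩
    · intro m x
      obtain ⟨N, hN, hsub⟩ :=
        h𝒲d (Nat.pairEquiv.symm m).1 (Nat.pairEquiv.symm m).2 (x : X)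
      refine ⟨Subtype.val ⁻¹' N, ?_, ?_⟩
      · rw [nhds_induced]
        exact Filter.preimage_mem_comap hN
      · rintro S1 ⟨⟨W1, hW1, -, rfl⟩, ⟨x1, hx1S, hx1N⟩⟩ S2 ⟨⟨W2, hW2, -, rfl⟩, ⟨x2, hx2S, hx2N⟩⟩
        have hW12 : W1 = W2 :=
          hsub ⟨hW1, ⟨x1, hx1S, hx1N⟩⟩ ⟨hW2, ⟨x2, hx2S, hx2N⟩⟩
        rw [hW12]
  · -- refines
    rintro S hS
    obtain ⟨p, W, hW, hWB, rfl⟩ := mem_iUnion.mp hS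
    obtain ⟨C, hC, hWC⟩ := h𝒱r p.1 W (h𝒲𝒱 p.1 p.2 hW)
    rcases hC with hC | hC
    · obtain ⟨U', hU', rfl⟩ := hC
      refine ⟨U', hU', ?_⟩
      intro x hx
      rw [← (hg U' hU').2]
      exact hWC hx
    · exfalso
      rw [mem_singleton_iff] at hC
      subst hC
      obtain ⟨a, haW, haB⟩ := hWB
      exact hWC haW (@subset_closure X (alphaTop T) (B p.1) a haB)
  · -- covers
    apply eq_univ_of_forall
    intro x
    have hxA : (x : X) ∈ ⋃ n, B n := hAB ▸ x.2
    obtain ⟨n, hxB⟩ := mem_iUnion.mp hxA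
    have : (x : X) ∈ ⋃₀ 𝒱 n := (h𝒱u n) ▸ mem_univ _
    obtain ⟨W, hW𝒱, hxW⟩ := this
    rw [h𝒲eq n] at hW𝒱
    obtain ⟨k, hWk⟩ := mem_iUnion.mp hW𝒱
    exact ⟨Subtype.val ⁻¹' W,
      mem_iUnion.mpr ⟨(n, k), W, hWk, ⟨(x : X), hxW, hxB⟩, rfl⟩, hxW⟩
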